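/- The exponential generating function for labelled tangles satisfies T_lbl(x,y) = e^{−x} + e^{−y} − 1 − B_lbl(x,y)⁻¹ in ℚ⟦x,y⟧, where T_lbl(x,y) = Σ_{i,j ≥ 0} t(i,j) x^i y^j/(i! j!), B_lbl(x,y) = Σ_{i,j ≥ 0} 2^{ij} x^i y^j/(i! j!), e^{−x} = Σ_{i ≥ 0} (−1)^i x^i/i!, and e^{−y} = Σ_{j ≥ 0} (−1)^j y^j/j!. -/

import Mathlib

/-- The neighbourhood of a top vertex `a` in the bicoloured graph `E`. -/
def topNbr {i j : ℕ} (E : Set (Fin i × Fin j)) (a : Fin i) : Set (Fin j) :=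
  {b | (a, b) ∈ E}

/-- The neighbourhood of a bottom vertex `b` in the bicoloured graph `E`. -/
def botNbr {i j : ℕ} (E : Set (Fin i × Fin j)) (b : Fin j) : Set (Fin i) :=
  {a | (a, b) ∈ E}

/-- Two sets are parallel (incomparable under inclusion). -/
def SetPar {α : Type*} (S T : Set α) : Prop := ¬ S ⊆ T ∧ ¬ T ⊆ S

/-- `a ⊤⊤ a'` for top vertices: their neighbourhoods are incomparable. -/
def TopRel {i j : ℕ} (E : Set (Fin i × Fin j)) (a a' : Fin i) : Prop :=
  SetPar (topNbr E a) (topNbr E a')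

/-- `b ⊥⊥ b'` for bottom vertices: their neighbourhoods are incomparable. -/
def BotRel {i j : ℕ} (E : Set (Fin i × Fin j)) (b b' : Fin j) : Prop :=
  SetPar (botNbr E b) (botNbr E b')

/-- A bicoloured graph with top vertex set `Fin i` and bottom vertex set `Fin j`
is a tangle if `i, j ≥ 2`, any two top vertices are connected under `⊤⊤` and any
two bottom vertices are connected under `⊥⊥`. -/
def IsTangle {i j : ℕ} (E : Set (Fin i × Fin j)) : Prop :=
  2 ≤ i ∧ 2 ≤ j ∧
    (∀ a a' : Fin i, Relation.ReflTransGen (TopRel E) a a') ∧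
    (∀ b b' : Fin j, Relation.ReflTransGen (BotRel E) b b')

/-- The number of tangles with top vertex set `Fin i` and bottom vertex set
`Fin j`. -/
noncomputable def tangleCount (i j : ℕ) : ℕ :=
  Set.ncard {E : Set (Fin i × Fin j) | IsTangle E}

/-- The two-variable exponential generating function for labelled tangles. -/
noncomputable def TlblGF : MvPowerSeries (Fin 2) ℚ :=
  fun e => (tangleCount (e 0) (e 1) : ℚ) / ((e 0).factorial * (e 1).factorial)

/-- The two-variable exponential generating function for labelled bicoloured
graphs, `B(x, y) = Σ 2^{ij} xⁱ yʲ/(i! j!)`. -/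
noncomputable def BlblGF : MvPowerSeries (Fin 2) ℚ :=
  fun e => (2 ^ (e 0 * e 1) : ℚ) / ((e 0).factorial * (e 1).factorial)

/-- The power series `e^{-x}` in the first variable. -/
noncomputable def expNegX : MvPowerSeries (Fin 2) ℚ :=
  fun e => if e 1 = 0 then (-1) ^ (e 0) * ((e 0).factorial : ℚ)⁻¹ else 0

/-- The power series `e^{-y}` in the second variable. -/
noncomputable def expNegY : MvPowerSeries (Fin 2) ℚ :=
  fun e => if e 0 = 0 then (-1) ^ (e 1) * ((e 1).factorial : ℚ)⁻¹ else 0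

namespace TangleAux

open Relation Set

variable {α β : Type*}

def gTop (E : Set (α × β)) (a : α) : Set β := {b | (a, b) ∈ E}
def gBot (E : Set (α × β)) (b : β) : Set α := {a | (a, b) ∈ E}
def gTopRel (E : Set (α × β)) (a a' : α) : Prop := SetPar (gTop E a) (gTop E a')
def gBotRel (E : Set (α × β)) (b b' : β) : Prop := SetPar (gBot E b) (gBot E b')

def GTangle (E : Set (α × β)) : Prop :=
  2 ≤ Nat.card α ∧ 2 ≤ Nat.card β ∧
    (∀ a a', Relation.ReflTransGen (gTopRel E) a a') ∧
    (∀ b b', Relation.ReflTransGen (gBotRel E) b b')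

theorem setPar_symm {S T : Set α} (h : SetPar S T) : SetPar T S := ⟨h.2, h.1⟩

theorem not_setPar_of_subset {S T : Set α} (h : S ⊆ T) : ¬ SetPar S T := fun hp => hp.1 h

theorem subset_or_subset_of_not_par {S T : Set α} (h : ¬ SetPar S T) : S ⊆ T ∨ T ⊆ S := by
  by_contra hc
  push_neg at hc
  exact h ⟨hc.1, hc.2⟩

theorem rtg_stuck {γ : Type*} {r : γ → γ → Prop} {S : Set γ}
    (hS : ∀ x ∈ S, ∀ y, r x y → y ∈ S) {x y : γ}
    (h : Relation.ReflTransGen r x y) (hx : x ∈ S) : y ∈ S := by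
  induction h with
  | refl => exact hx
  | tail _ h2 ih => exact hS _ ih _ h2

theorem rtg_first_edge {γ : Type*} {r : γ → γ → Prop} {x y : γ}
    (h : Relation.ReflTransGen r x y) (hxy : x ≠ y) : ∃ z, r x z := by
  rcases (Relation.ReflTransGen.cases_head h) with h | ⟨z, hz, _⟩
  · exact absurd h hxy
  · exact ⟨z, hz⟩

/-- The "maximal class" machinery: choose a vertex with maximal neighbourhood inside a
closed domain `D`; its connectivity class `K` is contained in `D` and dominates
all other vertices of `D`. -/
theorem max_class {γ δ : Type*} (f : γ → Set δ) (D : Set γ) (hD : D.Finite)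
    (hne : D.Nonempty)
    (hclosed : ∀ x ∈ D, ∀ y, SetPar (f x) (f y) → y ∈ D) :
    ∃ x₀ ∈ D,
      (∀ y, Relation.ReflTransGen (fun u v => SetPar (f u) (f v)) y x₀ → y ∈ D) ∧
      (∀ y ∈ D, ¬ Relation.ReflTransGen (fun u v => SetPar (f u) (f v)) y x₀ →
        ∀ z, Relation.ReflTransGen (fun u v => SetPar (f u) (f v)) z x₀ → f y ⊆ f z) := by
  obtain ⟨x₀, hx₀D, hmax⟩ := Set.Finite.exists_maximalFor f D hD hne
  set r : γ → γ → Prop := fun u v => SetPar (f u) (f v) with hr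
  have hrsymm : ∀ {u v}, r u v → r v u := fun h => setPar_symm h
  refine ⟨x₀, hx₀D, ?_, ?_⟩
  · intro y hy
    have : Relation.ReflTransGen r x₀ y :=
      (by haveI : Std.Symm r := ⟨fun _ _ h => hrsymm h⟩; exact Std.Symm.symm (r := Relation.ReflTransGen r) _ _ hy)
    exact rtg_stuck (fun x hx z hz => hclosed x hx z hz) this hx₀D
  · intro y hyD hyK z hz
    induction hz using Relation.ReflTransGen.head_induction_on with
    | refl =>
      have hnr : ¬ r y x₀ := fun h => hyK (Relation.ReflTransGen.single h)
      rcases subset_or_subset_of_not_par hnr with h | h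
      · exact h
      · exact hmax hyD h
    | head h' hc ih =>
      rename_i a c
      have hnr : ¬ r y a := fun h => hyK (Relation.ReflTransGen.head h (Relation.ReflTransGen.head h' hc))
      rcases subset_or_subset_of_not_par hnr with h | h
      · exact h
      · exact absurd (h.trans ih) h'.1


def restrictSet (E : Set (α × β)) (P : Set α) (Q : Set β) : Set (↥P × ↥Q) :=
  {x | ((x.1 : α), (x.2 : β)) ∈ E}

def IsBlock (E : Set (α × β)) (P : Set α) (Q : Set β) : Prop :=
  (∀ a ∈ P, ∀ b ∉ Q, (a, b) ∈ E) ∧ (∀ a ∉ P, ∀ b ∈ Q, (a, b) ∉ E) ∧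
    GTangle (restrictSet E P Q)

theorem gTop_restrict (E : Set (α × β)) (P : Set α) (Q : Set β) (x : ↥P) :
    gTop (restrictSet E P Q) x = Subtype.val ⁻¹' (gTop E ↑x) := rfl

theorem gBot_restrict (E : Set (α × β)) (P : Set α) (Q : Set β) (y : ↥Q) :
    gBot (restrictSet E P Q) y = Subtype.val ⁻¹' (gBot E ↑y) := rfl

theorem preimage_subset_iff_top {Q : Set β} {S S' : Set β} (hS' : Qᶜ ⊆ S') :
    (Subtype.val ⁻¹' S : Set ↥Q) ⊆ Subtype.val ⁻¹' S' ↔ S ⊆ S' := by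
  constructor
  · intro h b hb
    by_cases hbQ : b ∈ Q
    · exact h (show (⟨b, hbQ⟩ : ↥Q) ∈ _ from hb)
    · exact hS' hbQ
  · intro h b hb
    exact h hb

theorem preimage_subset_iff_bot {P : Set α} {S S' : Set α} (hS : S ⊆ P) :
    (Subtype.val ⁻¹' S : Set ↥P) ⊆ Subtype.val ⁻¹' S' ↔ S ⊆ S' := by
  constructor
  · intro h a ha
    exact h (show (⟨a, hS ha⟩ : ↥P) ∈ _ from ha)
  · intro h a ha
    exact h ha

theorem top_transfer {E : Set (α × β)} {P : Set α} {Q : Set β}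
    (hcross1 : ∀ a ∈ P, ∀ b, b ∉ Q → (a, b) ∈ E) (x y : ↥P) :
    gTopRel (restrictSet E P Q) x y ↔ gTopRel E ↑x ↑y := by
  have hx : Qᶜ ⊆ gTop E ↑x := fun b hb => hcross1 _ x.2 b hb
  have hy : Qᶜ ⊆ gTop E ↑y := fun b hb => hcross1 _ y.2 b hb
  unfold gTopRel SetPar
  rw [gTop_restrict, gTop_restrict, preimage_subset_iff_top hy, preimage_subset_iff_top hx]

theorem bot_transfer {E : Set (α × β)} {P : Set α} {Q : Set β}
    (hcross2 : ∀ a, a ∉ P → ∀ b ∈ Q, (a, b) ∉ E) (x y : ↥Q) :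
    gBotRel (restrictSet E P Q) x y ↔ gBotRel E ↑x ↑y := by
  have hx : gBot E ↑x ⊆ P := by
    intro a ha
    by_contra haP
    exact hcross2 a haP _ x.2 ha
  have hy : gBot E ↑y ⊆ P := by
    intro a ha
    by_contra haP
    exact hcross2 a haP _ y.2 ha
  unfold gBotRel SetPar
  rw [gBot_restrict, gBot_restrict, preimage_subset_iff_bot hx, preimage_subset_iff_bot hy]

theorem rtg_subtype {γ : Type*} {r : γ → γ → Prop} {P : Set γ} {r' : ↥P → ↥P → Prop}
    (hedge : ∀ x y : ↥P, r ↑x ↑y → r' x y) (hclosed : ∀ x ∈ P, ∀ y, r x y → y ∈ P)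
    {x y : ↥P} (h : Relation.ReflTransGen r ↑x ↑y) : Relation.ReflTransGen r' x y := by
  suffices H : ∀ z (hz : Relation.ReflTransGen r ↑x z) (hzP : z ∈ P),
      Relation.ReflTransGen r' x ⟨z, hzP⟩ by
    have := H ↑y h y.2
    rwa [Subtype.coe_eta] at this
  intro z hz
  induction hz with
  | refl => intro hzP; rw [show (⟨↑x, hzP⟩ : ↥P) = x from Subtype.ext rfl]
  | tail hab hbc ih =>
    intro hzP
    rename_i b c
    have hbP : b ∈ P := rtg_stuck hclosed hab x.2
    exact Relation.ReflTransGen.tail (ih hbP) (hedge ⟨b, hbP⟩ ⟨c, hzP⟩ hbc)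

theorem exists_block [Finite α] [Finite β] (E : Set (α × β))
    (hN : ∀ a, gTop E a ≠ Set.univ) (hM : ∀ b, gBot E b ≠ ∅)
    (hne : Nonempty α ∨ Nonempty β) :
    ∃ (P : Set α) (Q : Set β), IsBlock E P Q := by
  classical
  -- both sides nonempty
  have hα : Nonempty α := by
    by_contra hc
    rw [not_nonempty_iff] at hc
    have hβ : Nonempty β := hne.resolve_left (by exact fun h => (not_nonempty_iff.2 hc) h)
    obtain ⟨b⟩ := hβ
    exact hM b (Set.eq_empty_of_isEmpty _)
  have hβ : Nonempty β := by
    by_contra hc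
    rw [not_nonempty_iff] at hc
    obtain ⟨a⟩ := hα
    exact hN a (Set.eq_empty_of_isEmpty (gTop E a) ▸ (Set.univ_eq_empty_iff.2 hc).symm)
  -- maximal top vertex and its class P
  obtain ⟨astar, -, hKmem, hKdom⟩ :=
    max_class (gTop E) Set.univ Set.finite_univ Set.univ_nonempty
      (fun _ _ y _ => Set.mem_univ y)
  set P : Set α := {a | Relation.ReflTransGen (gTopRel E) a astar} with hPdef
  have hastarP : astar ∈ P := Relation.ReflTransGen.refl
  have fact1 : ∀ a, a ∉ P → ∀ a' ∈ P, gTop E a ⊆ gTop E a' := by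
    intro a haP a' ha'
    exact hKdom a (Set.mem_univ a) haP a' ha'
  have pedge : ∀ x ∈ P, ∀ y, gTopRel E x y → y ∈ P := by
    intro x hx y h
    exact Relation.ReflTransGen.head (setPar_symm h) hx
  have pconn : ∀ x ∈ P, ∀ y ∈ P, Relation.ReflTransGen (gTopRel E) x y := by
    intro x hx y hy
    exact hx.trans ((by haveI : Std.Symm (gTopRel E) := ⟨fun _ _ h => setPar_symm h⟩; exact Std.Symm.symm (r := Relation.ReflTransGen (gTopRel E)) _ _ hy))
  -- P has at least two elements
  have hP2' : ∃ a2 ∈ P, a2 ≠ astar := by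
    by_contra hc
    push_neg at hc
    obtain ⟨b, hb⟩ := Set.ne_univ_iff_exists_notMem _ |>.1 (hN astar)
    refine hM b ?_
    ext x
    simp only [Set.mem_empty_iff_false, iff_false]
    intro hx
    by_cases hxa : x = astar
    · exact hb (hxa ▸ hx)
    · have hxP : x ∉ P := fun h => hxa (hc x h)
      exact hb (fact1 x hxP astar hastarP hx)
  have hP2 : ∀ a ∈ P, ∃ a2 ∈ P, a2 ≠ a := by
    intro a ha
    obtain ⟨a2, ha2, hne2⟩ := hP2'
    by_cases hx : a = astar
    · exact ⟨a2, ha2, hx ▸ hne2⟩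
    · exact ⟨astar, hastarP, fun h => hx h.symm⟩
  have no_lonely : ∀ a ∈ P,
      (∀ z ∈ P, gTop E a ⊆ gTop E z ∨ gTop E z ⊆ gTop E a) → False := by
    intro a ha hcomp
    obtain ⟨a2, ha2, hne2⟩ := hP2 a ha
    obtain ⟨z, hz⟩ := rtg_first_edge (pconn a ha a2 ha2) (fun h => hne2 h.symm)
    have hzP : z ∈ P := pedge a ha z hz
    rcases hcomp z hzP with h | h
    · exact hz.1 h
    · exact hz.2 h
  have dichot : ∀ b, gBot E b ⊆ P ∨ P ⊆ gBot E b := by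
    intro b
    by_contra hc
    push_neg at hc
    obtain ⟨h1, h2⟩ := hc
    obtain ⟨x, hxM, hxP⟩ := Set.not_subset.1 h1
    obtain ⟨a', ha'P, ha'M⟩ := Set.not_subset.1 h2
    exact ha'M (fact1 x hxP a' ha'P hxM)
  set Q : Set β := {b | ¬ P ⊆ gBot E b} with hQdef
  have hQsub : ∀ b ∈ Q, gBot E b ⊆ P := fun b hb => (dichot b).resolve_right hb
  have hQc : ∀ b, b ∉ Q → P ⊆ gBot E b := fun b hb => not_not.1 hb
  have hQne : Q.Nonempty := by
    by_contra hc
    rw [Set.not_nonempty_iff_eq_empty] at hc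
    refine hN astar ?_
    ext b
    simp only [Set.mem_univ, iff_true]
    have : b ∉ Q := by rw [hc]; exact Set.notMem_empty b
    exact hQc b this hastarP
  have hQ2 : ∀ b ∈ Q, ∃ b2 ∈ Q, b2 ≠ b := by
    intro b1 hb1
    by_contra hc
    push_neg at hc
    obtain ⟨a, ha⟩ := Set.nonempty_iff_ne_empty.2 (hM b1)
    have haP : a ∈ P := hQsub b1 hb1 ha
    refine hN a ?_
    ext b
    simp only [Set.mem_univ, iff_true]
    by_cases hbQ : b ∈ Q
    · rwa [hc b hbQ]
    · exact hQc b hbQ haP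
  have bedge : ∀ x ∈ Q, ∀ y, gBotRel E x y → y ∈ Q := by
    intro x hx y h
    by_contra hyQ
    exact h.1 ((hQsub x hx).trans (hQc y hyQ))
  obtain ⟨bstar, hbstarQ, hKmemB, hKdomB⟩ :=
    max_class (gBot E) Q (Set.toFinite Q) hQne (fun x hx y h => bedge x hx y h)
  have hbstarK : Relation.ReflTransGen (gBotRel E) bstar bstar := Relation.ReflTransGen.refl
  -- every a ∈ P is seen by some member of K
  have Wfull : ∀ a ∈ P, ∃ b, Relation.ReflTransGen (gBotRel E) b bstar ∧ a ∈ gBot E b := by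
    intro a ha
    by_contra hc
    push_neg at hc
    refine no_lonely a ha (fun z hz => Or.inl ?_)
    intro b hb
    by_cases hbQ : b ∈ Q
    · by_cases hbK : Relation.ReflTransGen (gBotRel E) b bstar
      · exact absurd hb (hc b hbK)
      · have : gBot E b ⊆ gBot E bstar := hKdomB b hbQ hbK bstar hbstarK
        exact absurd (this hb) (hc bstar hbstarK)
    · exact hQc b hbQ hz
  -- Q is exactly K, the class of bstar
  have hQK : ∀ b ∈ Q, Relation.ReflTransGen (gBotRel E) b bstar := by
    intro b0 hb0Q
    by_contra hb0K
    set T : Set α := {a | ∀ b, Relation.ReflTransGen (gBotRel E) b bstar → a ∈ gBot E b}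
      with hTdef
    have hTP : T ⊆ P := fun a haT => hQsub bstar hbstarQ (haT bstar hbstarK)
    have hMT : gBot E b0 ⊆ T := by
      intro x hx b hbK
      exact hKdomB b0 hb0Q hb0K b hbK hx
    have hTne : T.Nonempty := (Set.nonempty_iff_ne_empty.2 (hM b0)).mono hMT
    have hTproper : ∃ a ∈ P, a ∉ T := by
      obtain ⟨a, haP, haM⟩ := Set.not_subset.1 hbstarQ
      exact ⟨a, haP, fun haT => haM (haT bstar hbstarK)⟩
    have cross : ∀ a2 ∈ P, a2 ∉ T → ∀ a1 ∈ T, gTop E a2 ⊆ gTop E a1 := by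
      intro a2 ha2P ha2T a1 ha1T b hb
      by_cases hbQ : b ∈ Q
      · by_cases hbK : Relation.ReflTransGen (gBotRel E) b bstar
        · exact ha1T b hbK
        · have hsub : gBot E b ⊆ T := fun x hx b' hb'K => hKdomB b hbQ hbK b' hb'K hx
          exact absurd (hsub hb) ha2T
      · exact hQc b hbQ (hTP ha1T)
    have stuckT : ∀ x ∈ T, ∀ y, gTopRel E x y → y ∈ T := by
      intro x hx y h
      by_contra hyT
      have hyP : y ∈ P := pedge x (hTP hx) y h
      exact h.2 (cross y hyP hyT x hx)
    obtain ⟨a1, ha1T⟩ := hTne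
    obtain ⟨a2, ha2P, ha2T⟩ := hTproper
    exact ha2T (rtg_stuck stuckT (pconn a1 (hTP ha1T) a2 ha2P) ha1T)
  -- assemble the block
  refine ⟨P, Q, ?_, ?_, ?_⟩
  · intro a ha b hb
    exact hQc b hb ha
  · intro a ha b hb
    intro hE
    exact ha (hQsub b hb hE)
  · have hcross1 : ∀ a ∈ P, ∀ b, b ∉ Q → (a, b) ∈ E := fun a ha b hb => hQc b hb ha
    have hcross2 : ∀ a, a ∉ P → ∀ b ∈ Q, (a, b) ∉ E := fun a ha b hb hE => ha (hQsub b hb hE)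
    refine ⟨?_, ?_, ?_, ?_⟩
    · obtain ⟨a2, ha2, hne2⟩ := hP2'
      rw [Nat.card_coe_set_eq]
      exact (Set.one_lt_ncard_iff (Set.toFinite P)).2 ⟨a2, astar, ha2, hastarP, hne2⟩
    · obtain ⟨b1, hb1⟩ := hQne
      obtain ⟨b2, hb2, hne2⟩ := hQ2 b1 hb1
      rw [Nat.card_coe_set_eq]
      exact (Set.one_lt_ncard_iff (Set.toFinite Q)).2 ⟨b2, b1, hb2, hb1, hne2⟩
    · intro x y
      exact rtg_subtype (fun u v h => (top_transfer hcross1 u v).2 h) pedge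
        (pconn ↑x x.2 ↑y y.2)
    · intro x y
      have hconn : Relation.ReflTransGen (gBotRel E) ↑x ↑y :=
        (hQK ↑x x.2).trans
          ((by haveI : Std.Symm (gBotRel E) := ⟨fun _ _ h => setPar_symm h⟩; exact Std.Symm.symm (r := Relation.ReflTransGen (gBotRel E)) _ _ (hQK ↑y y.2)))
      exact rtg_subtype (fun u v h => (bot_transfer hcross2 u v).2 h) bedge hconn

section BlockFacts

set_option linter.unusedSectionVars false

variable [Finite α] [Finite β] {E : Set (α × β)} {P : Set α} {Q : Set β}

theorem block_pair_top (hB : IsBlock E P Q) : ∃ a a', a ∈ P ∧ a' ∈ P ∧ a ≠ a' := by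
  have h := hB.2.2.1
  rw [Nat.card_coe_set_eq] at h
  obtain ⟨a, a', ha, ha', hne⟩ := (Set.one_lt_ncard_iff (Set.toFinite P)).1 h
  exact ⟨a, a', ha, ha', hne⟩

theorem block_pair_bot (hB : IsBlock E P Q) : ∃ b b', b ∈ Q ∧ b' ∈ Q ∧ b ≠ b' := by
  have h := hB.2.2.2.1
  rw [Nat.card_coe_set_eq] at h
  obtain ⟨b, b', hb, hb', hne⟩ := (Set.one_lt_ncard_iff (Set.toFinite Q)).1 h
  exact ⟨b, b', hb, hb', hne⟩

theorem block_u4 (hB : IsBlock E P Q) : ∀ x, x ∉ P → ∀ a ∈ P, gTop E x ⊆ gTop E a := by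
  intro x hx a ha b hb
  by_cases hbQ : b ∈ Q
  · exact absurd hb (hB.2.1 x hx b hbQ)
  · exact hB.1 a ha b hbQ

theorem block_botsub (hB : IsBlock E P Q) : ∀ b ∈ Q, gBot E b ⊆ P := by
  intro b hb x hx
  by_contra hxP
  exact hB.2.1 x hxP b hb hx

theorem block_incident_top (hB : IsBlock E P Q) : ∀ a ∈ P, ∃ z ∈ P, gTopRel E a z := by
  intro a ha
  obtain ⟨a1, a2, ha1, ha2, hne⟩ := block_pair_top hB
  have key : ∀ a' , ∀ (ha' : a' ∈ P), a ≠ a' → ∃ z ∈ P, gTopRel E a z := by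
    intro a' ha' hne'
    have hconn := hB.2.2.2.2.1 ⟨a, ha⟩ ⟨a', ha'⟩
    obtain ⟨w, hw⟩ := rtg_first_edge hconn (fun h => hne' (congrArg Subtype.val h))
    exact ⟨↑w, w.2, (top_transfer hB.1 ⟨a, ha⟩ w).1 hw⟩
  by_cases h1 : a = a1
  · exact key a2 ha2 (h1 ▸ fun h => hne h)
  · exact key a1 ha1 h1

theorem block_incident_bot (hB : IsBlock E P Q) : ∀ b ∈ Q, ∃ z ∈ Q, gBotRel E b z := by
  intro b hb
  obtain ⟨b1, b2, hb1, hb2, hne⟩ := block_pair_bot hB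
  have key : ∀ b', ∀ (hb' : b' ∈ Q), b ≠ b' → ∃ z ∈ Q, gBotRel E b z := by
    intro b' hb' hne'
    have hconn := hB.2.2.2.2.2 ⟨b, hb⟩ ⟨b', hb'⟩
    obtain ⟨w, hw⟩ := rtg_first_edge hconn (fun h => hne' (congrArg Subtype.val h))
    exact ⟨↑w, w.2, (bot_transfer hB.2.1 ⟨b, hb⟩ w).1 hw⟩
  by_cases h1 : b = b1
  · exact key b2 hb2 (h1 ▸ fun h => hne h)
  · exact key b1 hb1 h1

theorem block_Q_char (hB : IsBlock E P Q) : Q = {b | ¬ P ⊆ gBot E b} := by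
  ext b
  simp only [Set.mem_setOf_eq]
  constructor
  · intro hb hPM
    obtain ⟨z, hz, hrel⟩ := block_incident_bot hB b hb
    exact hrel.2 ((block_botsub hB z hz).trans hPM)
  · intro h
    by_contra hbQ
    exact h (fun a ha => hB.1 a ha b hbQ)

theorem block_good (hB : IsBlock E P Q) :
    (∀ a, gTop E a ≠ Set.univ) ∧ (∀ b, gBot E b ≠ ∅) := by
  constructor
  · intro a hu
    by_cases haP : a ∈ P
    · obtain ⟨z, hz, hrel⟩ := block_incident_top hB a haP
      exact hrel.2 (hu ▸ Set.subset_univ _)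
    · obtain ⟨b1, b2, hb1, hb2, hne⟩ := block_pair_bot hB
      exact hB.2.1 a haP b1 hb1 (by rw [show ((a,b1) ∈ E) = (b1 ∈ gTop E a) from rfl, hu]; trivial)
  · intro b he
    by_cases hbQ : b ∈ Q
    · obtain ⟨z, hz, hrel⟩ := block_incident_bot hB b hbQ
      exact hrel.1 (he ▸ Set.empty_subset _)
    · obtain ⟨a1, a2, ha1, ha2, hne⟩ := block_pair_top hB
      have : a1 ∈ gBot E b := hB.1 a1 ha1 b hbQ
      rw [he] at this
      exact this

theorem block_P_subset {P2 : Set α} {Q2 : Set β} (hB1 : IsBlock E P Q)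
    (hB2 : IsBlock E P2 Q2) : P ⊆ P2 := by
  intro a ha
  by_contra haP2
  by_cases hint : ∃ z, z ∈ P ∧ z ∈ P2
  · obtain ⟨z, hz1, hz2⟩ := hint
    set S : Set ↥P := {x | ↑x ∉ P2} with hS
    have hclosed : ∀ x ∈ S, ∀ y, gTopRel (restrictSet E P Q) x y → y ∈ S := by
      intro x hx y hrel
      have hamb : gTopRel E ↑x ↑y := (top_transfer hB1.1 x y).1 hrel
      intro hy2
      exact hamb.1 (block_u4 hB2 ↑x hx ↑y hy2)
    have hconn := hB1.2.2.2.2.1 ⟨a, ha⟩ ⟨z, hz1⟩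
    exact (rtg_stuck hclosed hconn haP2) hz2
  · push_neg at hint
    obtain ⟨y, y2, hy, hy2, hney⟩ := block_pair_top hB2
    obtain ⟨w, hw, hrel⟩ := block_incident_top hB1 a ha
    have h1 : gTop E a ⊆ gTop E y := block_u4 hB2 a haP2 y hy
    have h2 : gTop E y ⊆ gTop E w := block_u4 hB1 y (fun hc => hint y hc hy) w hw
    exact hrel.1 (h1.trans h2)

theorem block_unique {P2 : Set α} {Q2 : Set β} (hB1 : IsBlock E P Q)
    (hB2 : IsBlock E P2 Q2) : P = P2 ∧ Q = Q2 := by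
  have hP : P = P2 := le_antisymm (block_P_subset hB1 hB2) (block_P_subset hB2 hB1)
  refine ⟨hP, ?_⟩
  rw [block_Q_char hB1, block_Q_char hB2, hP]

end BlockFacts

section Relabel

variable {γ δ : Type*}

theorem gTop_image (e : α ≃ γ) (f : β ≃ δ) (E : Set (α × β)) (a : α) :
    gTop ((Equiv.prodCongr e f) '' E) (e a) = f '' (gTop E a) := by
  ext b'
  constructor
  · rintro ⟨⟨x1, x2⟩, hx, heq⟩
    obtain ⟨h1, h2⟩ := Prod.mk.injEq _ _ _ _ ▸ heq
    have hx1 : x1 = a := e.injective h1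
    exact ⟨x2, hx1 ▸ hx, h2⟩
  · rintro ⟨b, hb, rfl⟩
    exact ⟨(a, b), hb, rfl⟩

theorem gBot_image (e : α ≃ γ) (f : β ≃ δ) (E : Set (α × β)) (b : β) :
    gBot ((Equiv.prodCongr e f) '' E) (f b) = e '' (gBot E b) := by
  ext a'
  constructor
  · rintro ⟨⟨x1, x2⟩, hx, heq⟩
    obtain ⟨h1, h2⟩ := Prod.mk.injEq _ _ _ _ ▸ heq
    have hx2 : x2 = b := f.injective h2
    exact ⟨x1, hx2 ▸ hx, h1⟩
  · rintro ⟨a, ha, rfl⟩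
    exact ⟨(a, b), ha, rfl⟩

theorem setPar_image {S T : Set α} (e : α ≃ γ) :
    SetPar (e '' S) (e '' T) ↔ SetPar S T := by
  unfold SetPar
  rw [Set.image_subset_image_iff e.injective, Set.image_subset_image_iff e.injective]

theorem gTangle_relabel (e : α ≃ γ) (f : β ≃ δ) (E : Set (α × β)) :
    GTangle ((Equiv.prodCongr e f) '' E) ↔ GTangle E := by
  have htop : ∀ a a', gTopRel ((Equiv.prodCongr e f) '' E) (e a) (e a') ↔ gTopRel E a a' := by
    intro a a'
    unfold gTopRel
    rw [gTop_image, gTop_image, setPar_image]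
  have hbot : ∀ b b', gBotRel ((Equiv.prodCongr e f) '' E) (f b) (f b') ↔ gBotRel E b b' := by
    intro b b'
    unfold gBotRel
    rw [gBot_image, gBot_image, setPar_image]
  unfold GTangle
  rw [Nat.card_congr e.symm, Nat.card_congr f.symm]
  constructor
  · rintro ⟨h1, h2, h3, h4⟩
    refine ⟨h1, h2, fun a a' => ?_, fun b b' => ?_⟩
    · have := Relation.ReflTransGen.lift e.symm
        (fun x y h => (htop (e.symm x) (e.symm y)).1
          (by rwa [e.apply_symm_apply, e.apply_symm_apply])) _ _ (h3 (e a) (e a'))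
      rwa [Function.onFun, e.symm_apply_apply, e.symm_apply_apply] at this
    · have := Relation.ReflTransGen.lift f.symm
        (fun x y h => (hbot (f.symm x) (f.symm y)).1
          (by rwa [f.apply_symm_apply, f.apply_symm_apply])) _ _ (h4 (f b) (f b'))
      rwa [Function.onFun, f.symm_apply_apply, f.symm_apply_apply] at this
  · rintro ⟨h1, h2, h3, h4⟩
    refine ⟨h1, h2, fun x y => ?_, fun x y => ?_⟩
    · have := Relation.ReflTransGen.lift e
        (fun a a' h => (htop a a').2 h) _ _ (h3 (e.symm x) (e.symm y))
      rwa [Function.onFun, e.apply_symm_apply, e.apply_symm_apply] at this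
    · have := Relation.ReflTransGen.lift f
        (fun b b' h => (hbot b b').2 h) _ _ (h4 (f.symm x) (f.symm y))
      rwa [Function.onFun, f.apply_symm_apply, f.apply_symm_apply] at this

theorem gTangle_fin {p q : ℕ} (E : Set (Fin p × Fin q)) : GTangle E ↔ IsTangle E := by
  unfold GTangle IsTangle
  rw [Nat.card_eq_fintype_card, Nat.card_eq_fintype_card, Fintype.card_fin, Fintype.card_fin]
  exact Iff.rfl

theorem tangleCount_eq (p q : ℕ) :
    tangleCount p q = Nat.card {E : Set (Fin p × Fin q) // IsTangle E} := by
  rw [tangleCount, ← Nat.card_coe_set_eq]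
  rfl

theorem card_gTangle (α β : Type*) [Fintype α] [Fintype β] :
    Nat.card {E : Set (α × β) // GTangle E}
      = tangleCount (Fintype.card α) (Fintype.card β) := by
  classical
  set e := Fintype.equivFin α
  set f := Fintype.equivFin β
  rw [tangleCount_eq]
  refine Nat.card_congr (Equiv.subtypeEquiv (Equiv.Set.congr (Equiv.prodCongr e f))
    (fun E => ?_))
  rw [← gTangle_fin]
  exact (gTangle_relabel e f E).symm

theorem tangleCount_eq_zero {p q : ℕ} (h : p < 2 ∨ q < 2) : tangleCount p q = 0 := by
  have hempty : {E : Set (Fin p × Fin q) | IsTangle E} = ∅ := by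
    ext E
    simp only [Set.mem_setOf_eq, Set.mem_empty_iff_false, iff_false]
    rintro ⟨h1, h2, -⟩
    omega
  rw [tangleCount, hempty, Set.ncard_empty]

end Relabel

section BlockCount

variable {E : Set (α × β)}

def buildE (P : Set α) (Q : Set β) (T : Set (↥P × ↥Q)) (F : Set (↥(Pᶜ) × ↥(Qᶜ))) :
    Set (α × β) :=
  {x | (∃ (h1 : x.1 ∈ P) (h2 : x.2 ∈ Q), (⟨x.1, h1⟩, ⟨x.2, h2⟩) ∈ T) ∨
       (x.1 ∈ P ∧ x.2 ∉ Q) ∨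
       (∃ (h1 : x.1 ∈ Pᶜ) (h2 : x.2 ∈ Qᶜ), (⟨x.1, h1⟩, ⟨x.2, h2⟩) ∈ F)}

theorem restrict_buildE (P : Set α) (Q : Set β) (T : Set (↥P × ↥Q))
    (F : Set (↥(Pᶜ) × ↥(Qᶜ))) : restrictSet (buildE P Q T F) P Q = T := by
  ext ⟨⟨a, ha⟩, ⟨b, hb⟩⟩
  simp only [restrictSet, buildE, Set.mem_setOf_eq]
  constructor
  · rintro (⟨h1, h2, h⟩ | ⟨-, h2⟩ | ⟨h1, -, -⟩)
    · exact h
    · exact absurd hb h2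
    · exact absurd ha h1
  · intro h
    exact Or.inl ⟨ha, hb, h⟩

theorem restrictc_buildE (P : Set α) (Q : Set β) (T : Set (↥P × ↥Q))
    (F : Set (↥(Pᶜ) × ↥(Qᶜ))) : restrictSet (buildE P Q T F) (Pᶜ) (Qᶜ) = F := by
  ext ⟨⟨a, ha⟩, ⟨b, hb⟩⟩
  simp only [restrictSet, buildE, Set.mem_setOf_eq]
  constructor
  · rintro (⟨h1, -, -⟩ | ⟨h1, -⟩ | ⟨h1, h2, h⟩)
    · exact absurd h1 ha
    · exact absurd h1 ha
    · exact h
  · intro h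
    exact Or.inr (Or.inr ⟨ha, hb, h⟩)

theorem isBlock_buildE (P : Set α) (Q : Set β) {T : Set (↥P × ↥Q)} (hT : GTangle T)
    (F : Set (↥(Pᶜ) × ↥(Qᶜ))) : IsBlock (buildE P Q T F) P Q := by
  refine ⟨?_, ?_, ?_⟩
  · intro a ha b hb
    exact Or.inr (Or.inl ⟨ha, hb⟩)
  · intro a ha b hb
    rintro (⟨h1, -, -⟩ | ⟨h1, -⟩ | ⟨-, h2, -⟩)
    · exact ha h1
    · exact ha h1
    · exact h2 hb
  · rw [restrict_buildE]
    exact hT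

theorem buildE_restrict (P : Set α) (Q : Set β) (hB : IsBlock E P Q) :
    buildE P Q (restrictSet E P Q) (restrictSet E (Pᶜ) (Qᶜ)) = E := by
  ext ⟨a, b⟩
  simp only [buildE, restrictSet, Set.mem_setOf_eq]
  constructor
  · rintro (⟨-, -, h⟩ | ⟨h1, h2⟩ | ⟨-, -, h⟩)
    · exact h
    · exact hB.1 a h1 b h2
    · exact h
  · intro h
    by_cases ha : a ∈ P
    · by_cases hb : b ∈ Q
      · exact Or.inl ⟨ha, hb, h⟩
      · exact Or.inr (Or.inl ⟨ha, hb⟩)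
    · by_cases hb : b ∈ Q
      · exact absurd h (hB.2.1 a ha b hb)
      · exact Or.inr (Or.inr ⟨ha, hb, h⟩)

noncomputable def blockEquiv (P : Set α) (Q : Set β) :
    {E : Set (α × β) // IsBlock E P Q} ≃
      {T : Set (↥P × ↥Q) // GTangle T} × Set (↥(Pᶜ) × ↥(Qᶜ)) where
  toFun E := ⟨⟨restrictSet E.1 P Q, E.2.2.2⟩, restrictSet E.1 (Pᶜ) (Qᶜ)⟩
  invFun TF := ⟨buildE P Q TF.1.1 TF.2, isBlock_buildE P Q TF.1.2 TF.2⟩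
  left_inv E := Subtype.ext (buildE_restrict P Q E.2)
  right_inv TF := by
    refine Prod.ext (Subtype.ext ?_) ?_
    · exact restrict_buildE P Q TF.1.1 TF.2
    · exact restrictc_buildE P Q TF.1.1 TF.2

theorem nat_card_set (γ : Type*) [Finite γ] : Nat.card (Set γ) = 2 ^ Nat.card γ := by
  have h : Nat.card (γ → Prop) = Nat.card Prop ^ Nat.card γ := Nat.card_fun
  rw [show Set γ = (γ → Prop) from rfl, h, Nat.card_eq_fintype_card (α := Prop)]
  simp

theorem card_block [Fintype α] [Fintype β] (P : Set α) (Q : Set β) :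
    Nat.card {E : Set (α × β) // IsBlock E P Q}
      = tangleCount P.ncard Q.ncard * 2 ^ ((Pᶜ : Set α).ncard * (Qᶜ : Set β).ncard) := by
  classical
  rw [Nat.card_congr (blockEquiv P Q), Nat.card_prod, card_gTangle,
    nat_card_set, Nat.card_prod]
  simp only [← Nat.card_coe_set_eq, Nat.card_eq_fintype_card]

end BlockCount

section GoodCount

theorem nat_card_sigma {ι : Type*} [Fintype ι] (f : ι → Type*) [∀ i, Finite (f i)] :
    Nat.card (Σ i, f i) = ∑ i, Nat.card (f i) := by
  letI : ∀ i, Fintype (f i) := fun i => Fintype.ofFinite _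
  rw [Nat.card_eq_fintype_card, Fintype.card_sigma]
  simp [Nat.card_eq_fintype_card]

theorem nat_card_subtype_compl {γ : Type*} [Finite γ] (p : γ → Prop) :
    Nat.card {x // ¬ p x} = Nat.card γ - Nat.card {x // p x} := by
  classical
  letI : Fintype γ := Fintype.ofFinite γ
  rw [Nat.card_eq_fintype_card, Nat.card_eq_fintype_card, Nat.card_eq_fintype_card,
    Fintype.card_subtype_compl]

theorem nat_card_partition {γ : Type*} [Finite γ] (p q : γ → Prop)
    (hcover : ∀ x, p x ∨ q x) :
    Nat.card {x // p x} + Nat.card {x // q x}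
      = Nat.card {x // p x ∧ q x} + Nat.card γ := by
  classical
  letI : Fintype γ := Fintype.ofFinite γ
  rw [Nat.card_eq_fintype_card, Nat.card_eq_fintype_card, Nat.card_eq_fintype_card,
    Nat.card_eq_fintype_card, Fintype.card_subtype, Fintype.card_subtype,
    Fintype.card_subtype]
  have h1 : (Finset.univ.filter p) ∩ (Finset.univ.filter q)
      = Finset.univ.filter (fun x => p x ∧ q x) := by
    ext x; simp
  have h2 : (Finset.univ.filter p) ∪ (Finset.univ.filter q) = Finset.univ := by
    ext x; simpa using hcover x
  rw [← Finset.card_inter_add_card_union, h1, h2, Finset.card_univ]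

theorem good_equiv [Finite α] [Finite β] (hne : Nonempty α ∨ Nonempty β) :
    Nat.card {E : Set (α × β) //
        (∀ a, gTop E a ≠ Set.univ) ∧ (∀ b, gBot E b ≠ ∅)}
      = Nat.card (Σ PQ : Set α × Set β, {E : Set (α × β) // IsBlock E PQ.1 PQ.2}) := by
  refine (Nat.card_congr (Equiv.ofBijective
    (fun x : (Σ PQ : Set α × Set β, {E : Set (α × β) // IsBlock E PQ.1 PQ.2}) =>
      (⟨x.2.1, block_good x.2.2⟩ :
        {E : Set (α × β) // (∀ a, gTop E a ≠ Set.univ) ∧ (∀ b, gBot E b ≠ ∅)}))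
    ⟨?_, ?_⟩)).symm
  · rintro ⟨PQ1, E1, h1⟩ ⟨PQ2, E2, h2⟩ heq
    have hE : E1 = E2 := congrArg Subtype.val heq
    subst hE
    obtain ⟨hP, hQ⟩ := block_unique h1 h2
    have hPQ : PQ1 = PQ2 := Prod.ext hP hQ
    subst hPQ
    rfl
  · rintro ⟨E, hE⟩
    obtain ⟨P, Q, hB⟩ := exists_block E hE.1 hE.2 hne
    exact ⟨⟨(P, Q), E, hB⟩, rfl⟩

def curryTop : Set (α × β) ≃ (α → Set β) where
  toFun E a := gTop E a
  invFun f := {x | x.2 ∈ f x.1}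
  left_inv E := by ext ⟨a, b⟩; rfl
  right_inv f := by funext a; ext b; rfl

def curryBot : Set (α × β) ≃ (β → Set α) where
  toFun E b := gBot E b
  invFun f := {x | x.1 ∈ f x.2}
  left_inv E := by ext ⟨a, b⟩; rfl
  right_inv f := by funext b; ext a; rfl

theorem card_ne_univ (γ : Type*) [Finite γ] :
    Nat.card {S : Set γ // S ≠ Set.univ} = 2 ^ Nat.card γ - 1 := by
  haveI : Nonempty {S : Set γ // S = Set.univ} := ⟨⟨Set.univ, rfl⟩⟩
  haveI : Subsingleton {S : Set γ // S = Set.univ} :=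
    ⟨by rintro ⟨S, rfl⟩ ⟨T, hT⟩; exact Subtype.ext hT.symm⟩
  have h := nat_card_subtype_compl (γ := Set γ) (fun S => S = Set.univ)
  have h1 : Nat.card {S : Set γ // S = Set.univ} = 1 := Nat.card_unique
  rw [h1, nat_card_set] at h
  exact h

theorem card_ne_empty (γ : Type*) [Finite γ] :
    Nat.card {S : Set γ // S ≠ ∅} = 2 ^ Nat.card γ - 1 := by
  haveI : Nonempty {S : Set γ // S = ∅} := ⟨⟨∅, rfl⟩⟩
  haveI : Subsingleton {S : Set γ // S = ∅} :=
    ⟨by rintro ⟨S, rfl⟩ ⟨T, hT⟩; exact Subtype.ext hT.symm⟩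
  have h := nat_card_subtype_compl (γ := Set γ) (fun S => S = ∅)
  have h1 : Nat.card {S : Set γ // S = (∅ : Set γ)} = 1 := Nat.card_unique
  rw [h1, nat_card_set] at h
  exact h

theorem card_nofull (α β : Type*) [Fintype α] [Fintype β] :
    Nat.card {E : Set (α × β) // ∀ a, gTop E a ≠ Set.univ}
      = (2 ^ Fintype.card β - 1) ^ Fintype.card α := by
  have e0 : {E : Set (α × β) // ∀ a, gTop E a ≠ Set.univ}
      ≃ {f : α → Set β // ∀ a, f a ≠ Set.univ} :=
    Equiv.subtypeEquiv curryTop (fun E => Iff.rfl)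
  have e1 : {E : Set (α × β) // ∀ a, gTop E a ≠ Set.univ}
      ≃ ∀ _ : α, {S : Set β // S ≠ Set.univ} :=
    e0.trans (Equiv.subtypePiEquivPi (p := fun (_ : α) (S : Set β) => S ≠ Set.univ))
  rw [Nat.card_congr e1, Nat.card_pi]
  rw [Finset.prod_congr rfl (fun a _ => card_ne_univ β)]
  rw [Finset.prod_const, Finset.card_univ, Nat.card_eq_fintype_card]

theorem card_noempty (α β : Type*) [Fintype α] [Fintype β] :
    Nat.card {E : Set (α × β) // ∀ b, gBot E b ≠ ∅}
      = (2 ^ Fintype.card α - 1) ^ Fintype.card β := by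
  have e0 : {E : Set (α × β) // ∀ b, gBot E b ≠ ∅}
      ≃ {f : β → Set α // ∀ b, f b ≠ ∅} :=
    Equiv.subtypeEquiv curryBot (fun E => Iff.rfl)
  have e1 : {E : Set (α × β) // ∀ b, gBot E b ≠ ∅}
      ≃ ∀ _ : β, {S : Set α // S ≠ ∅} :=
    e0.trans (Equiv.subtypePiEquivPi (p := fun (_ : β) (S : Set α) => S ≠ (∅ : Set α)))
  rw [Nat.card_congr e1, Nat.card_pi]
  rw [Finset.prod_congr rfl (fun b _ => card_ne_empty α)]
  rw [Finset.prod_const, Finset.card_univ, Nat.card_eq_fintype_card]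

theorem sum_over_sets {γ : Type*} [Fintype γ] (h : ℕ → ℕ) :
    ∑ S : Set γ, h S.ncard
      = ∑ k ∈ Finset.range (Fintype.card γ + 1), (Fintype.card γ).choose k * h k := by
  classical
  rw [← Equiv.sum_comp (Fintype.finsetEquivSet (α := γ)) (fun S => h S.ncard)]
  simp only [Fintype.finsetEquivSet_apply, Set.ncard_coe_finset]
  rw [← Finset.powerset_univ, Finset.sum_powerset, Finset.card_univ]
  refine Finset.sum_congr rfl (fun k _ => ?_)
  have hcongr : ∀ t ∈ Finset.powersetCard k (Finset.univ : Finset γ), h t.card = h k := by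
    intro t ht
    rw [(Finset.mem_powersetCard.1 ht).2]
  rw [Finset.sum_congr rfl hcongr, Finset.sum_const, smul_eq_mul,
    Finset.card_powersetCard, Finset.card_univ]

theorem sum_over_sets' {γ : Type*} [Fintype γ] (f : Set γ → ℕ) (h : ℕ → ℕ)
    (hf : ∀ S, f S = h S.ncard) :
    ∑ S : Set γ, f S
      = ∑ k ∈ Finset.range (Fintype.card γ + 1), (Fintype.card γ).choose k * h k := by
  rw [Finset.sum_congr rfl (fun S _ => hf S)]
  exact sum_over_sets h

theorem key_count (i j : ℕ) (hne : i ≠ 0 ∨ j ≠ 0) :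
    (∑ p ∈ Finset.range (i+1), ∑ q ∈ Finset.range (j+1),
        i.choose p * (j.choose q * (tangleCount p q * 2 ^ ((i-p)*(j-q))))) + 2 ^ (i*j)
      = (2^j - 1)^i + (2^i - 1)^j := by
  classical
  have hcover : ∀ E : Set (Fin i × Fin j),
      (∀ a, gTop E a ≠ Set.univ) ∨ (∀ b, gBot E b ≠ ∅) := by
    intro E
    by_contra hc
    push_neg at hc
    obtain ⟨⟨a, ha⟩, ⟨b, hb⟩⟩ := hc
    have hab : b ∈ gTop E a := ha ▸ Set.mem_univ b
    have : a ∈ gBot E b := hab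
    rw [hb] at this
    exact this
  have hpart := nat_card_partition (γ := Set (Fin i × Fin j)) _ _ hcover
  rw [card_nofull, card_noempty] at hpart
  have hsetcard : Nat.card (Set (Fin i × Fin j)) = 2 ^ (i * j) := by
    rw [nat_card_set, Nat.card_prod]
    simp [Nat.card_eq_fintype_card]
  have hne' : Nonempty (Fin i) ∨ Nonempty (Fin j) := by
    rcases hne with h | h
    · exact Or.inl ⟨⟨0, Nat.pos_of_ne_zero h⟩⟩
    · exact Or.inr ⟨⟨0, Nat.pos_of_ne_zero h⟩⟩
  have hgood : Nat.card {E : Set (Fin i × Fin j) //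
      (∀ a, gTop E a ≠ Set.univ) ∧ (∀ b, gBot E b ≠ ∅)}
      = ∑ p ∈ Finset.range (i+1), ∑ q ∈ Finset.range (j+1),
          i.choose p * (j.choose q * (tangleCount p q * 2 ^ ((i-p)*(j-q)))) := by
    rw [good_equiv hne', nat_card_sigma]
    have hterm : ∀ PQ : Set (Fin i) × Set (Fin j),
        Nat.card {E : Set (Fin i × Fin j) // IsBlock E PQ.1 PQ.2}
          = tangleCount PQ.1.ncard PQ.2.ncard
              * 2 ^ ((i - PQ.1.ncard) * (j - PQ.2.ncard)) := by
      intro PQ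
      rw [card_block]
      have hc1 : (PQ.1ᶜ : Set (Fin i)).ncard = i - PQ.1.ncard := by
        have := Set.ncard_add_ncard_compl PQ.1
        rw [Nat.card_eq_fintype_card, Fintype.card_fin] at this
        omega
      have hc2 : (PQ.2ᶜ : Set (Fin j)).ncard = j - PQ.2.ncard := by
        have := Set.ncard_add_ncard_compl PQ.2
        rw [Nat.card_eq_fintype_card, Fintype.card_fin] at this
        omega
      rw [hc1, hc2]
    rw [Finset.sum_congr rfl (fun PQ _ => hterm PQ), Fintype.sum_prod_type]
    have hin : ∀ P : Set (Fin i),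
        (∑ Q : Set (Fin j), tangleCount P.ncard Q.ncard
            * 2 ^ ((i - P.ncard) * (j - Q.ncard)))
        = ∑ q ∈ Finset.range (j+1),
            j.choose q * (tangleCount P.ncard q * 2 ^ ((i - P.ncard)*(j-q))) := by
      intro P
      have := sum_over_sets'
        (fun Q : Set (Fin j) => tangleCount P.ncard Q.ncard
            * 2 ^ ((i - P.ncard) * (j - Q.ncard)))
        (fun q => tangleCount P.ncard q * 2 ^ ((i - P.ncard) * (j - q)))
        (fun S => rfl)
      rwa [Fintype.card_fin] at this
    rw [Finset.sum_congr rfl (fun P _ => hin P)]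
    have := sum_over_sets'
      (fun P : Set (Fin i) => ∑ q ∈ Finset.range (j+1),
          j.choose q * (tangleCount P.ncard q * 2 ^ ((i - P.ncard)*(j-q))))
      (fun p => ∑ q ∈ Finset.range (j+1),
          j.choose q * (tangleCount p q * 2 ^ ((i - p)*(j-q))))
      (fun S => rfl)
    rw [Fintype.card_fin] at this
    rw [this]
    refine Finset.sum_congr rfl (fun p _ => ?_)
    rw [Finset.mul_sum]
  rw [hgood, hsetcard] at hpart
  rw [Fintype.card_fin, Fintype.card_fin] at hpart
  exact hpart.symm

end GoodCount

section PS

open MvPowerSeries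

noncomputable def fs (a b : ℕ) : Fin 2 →₀ ℕ := Finsupp.single 0 a + Finsupp.single 1 b

theorem fs_apply0 (a b : ℕ) : fs a b 0 = a := by
  simp [fs, Finsupp.single_apply]

theorem fs_apply1 (a b : ℕ) : fs a b 1 = b := by
  simp [fs, Finsupp.single_apply]

theorem fin2_ext {m1 m2 : Fin 2 →₀ ℕ} (h0 : m1 0 = m2 0) (h1 : m1 1 = m2 1) :
    m1 = m2 :=
  Finsupp.ext (Fin.forall_fin_two.2 ⟨h0, h1⟩)

theorem fs_eta (m : Fin 2 →₀ ℕ) : fs (m 0) (m 1) = m :=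
  fin2_ext (fs_apply0 _ _) (fs_apply1 _ _)

theorem fs_eq_zero_iff (a b : ℕ) : fs a b = 0 ↔ a = 0 ∧ b = 0 := by
  constructor
  · intro h
    exact ⟨by rw [← fs_apply0 a b, h]; rfl, by rw [← fs_apply1 a b, h]; rfl⟩
  · rintro ⟨rfl, rfl⟩
    exact fin2_ext (by rw [fs_apply0]; rfl) (by rw [fs_apply1]; rfl)

theorem coeff_mul_eq (φ ψ : MvPowerSeries (Fin 2) ℚ) (n : Fin 2 →₀ ℕ) :
    MvPowerSeries.coeff n (φ * ψ)
      = ∑ a ∈ Finset.range (n 0 + 1), ∑ b ∈ Finset.range (n 1 + 1),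
          MvPowerSeries.coeff (fs a b) φ
            * MvPowerSeries.coeff (fs (n 0 - a) (n 1 - b)) ψ := by
  classical
  rw [MvPowerSeries.coeff_mul]
  rw [← Finset.sum_product']
  refine Finset.sum_bij' (fun p _ => (p.1 0, p.1 1))
    (fun q _ => (fs q.1 q.2, fs (n 0 - q.1) (n 1 - q.2))) ?_ ?_ ?_ ?_ ?_
  · intro p hp
    have hsum := Finset.HasAntidiagonal.mem_antidiagonal.1 hp
    have h0 : p.1 0 + p.2 0 = n 0 := by rw [← Finsupp.add_apply, hsum]
    have h1 : p.1 1 + p.2 1 = n 1 := by rw [← Finsupp.add_apply, hsum]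
    rw [Finset.mem_product, Finset.mem_range, Finset.mem_range]
    omega
  · intro q hq
    rw [Finset.mem_product, Finset.mem_range, Finset.mem_range] at hq
    rw [Finset.HasAntidiagonal.mem_antidiagonal]
    refine fin2_ext ?_ ?_
    · rw [Finsupp.add_apply, fs_apply0, fs_apply0]; omega
    · rw [Finsupp.add_apply, fs_apply1, fs_apply1]; omega
  · intro p hp
    have hsum := Finset.HasAntidiagonal.mem_antidiagonal.1 hp
    have h0 : p.1 0 + p.2 0 = n 0 := by rw [← Finsupp.add_apply, hsum]
    have h1 : p.1 1 + p.2 1 = n 1 := by rw [← Finsupp.add_apply, hsum]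
    have e0 : n 0 - p.1 0 = p.2 0 := by omega
    have e1 : n 1 - p.1 1 = p.2 1 := by omega
    dsimp only
    rw [e0, e1, fs_eta, fs_eta]
  · intro q hq
    dsimp only
    rw [fs_apply0, fs_apply1]
  · intro p hp
    have hsum := Finset.HasAntidiagonal.mem_antidiagonal.1 hp
    have h0 : p.1 0 + p.2 0 = n 0 := by rw [← Finsupp.add_apply, hsum]
    have h1 : p.1 1 + p.2 1 = n 1 := by rw [← Finsupp.add_apply, hsum]
    have e0 : n 0 - p.1 0 = p.2 0 := by omega
    have e1 : n 1 - p.1 1 = p.2 1 := by omega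
    dsimp only
    rw [e0, e1, fs_eta, fs_eta]

theorem binom_neg (i j : ℕ) :
    ∑ a ∈ Finset.range (i+1), (i.choose a : ℚ) * (-1)^a * 2^((i-a)*j)
      = (2^j - 1)^i := by
  have h := add_pow (-1 : ℚ) (2^j) i
  rw [show (-1 : ℚ) + 2^j = 2^j - 1 by ring] at h
  rw [h]
  refine Finset.sum_congr rfl (fun a _ => ?_)
  rw [mul_comm (i-a) j, pow_mul]
  ring

theorem scalar_sum (i j : ℕ) (hne : ¬(i = 0 ∧ j = 0)) :
    ∑ a ∈ Finset.range (i+1), ∑ b ∈ Finset.range (j+1),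
      (((if b = 0 then (-1:ℚ)^a * (a.factorial:ℚ)⁻¹ else 0)
        + (if a = 0 then (-1:ℚ)^b * (b.factorial:ℚ)⁻¹ else 0)
        - (if a = 0 ∧ b = 0 then (1:ℚ) else 0)
        - (tangleCount a b : ℚ) / ((a.factorial :ℚ) * (b.factorial:ℚ)))
       * ((2:ℚ)^((i-a)*(j-b)) / (((i-a).factorial : ℚ) * ((j-b).factorial : ℚ)))) = 0 := by
  have hfac : ∀ n : ℕ, ((n.factorial : ℚ)) ≠ 0 :=
    fun n => Nat.cast_ne_zero.2 (Nat.factorial_ne_zero n)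
  have hterm : ∀ a ∈ Finset.range (i+1), ∀ b ∈ Finset.range (j+1),
      (((if b = 0 then (-1:ℚ)^a * (a.factorial:ℚ)⁻¹ else 0)
        + (if a = 0 then (-1:ℚ)^b * (b.factorial:ℚ)⁻¹ else 0)
        - (if a = 0 ∧ b = 0 then (1:ℚ) else 0)
        - (tangleCount a b : ℚ) / ((a.factorial :ℚ) * (b.factorial:ℚ)))
       * ((2:ℚ)^((i-a)*(j-b)) / (((i-a).factorial : ℚ) * ((j-b).factorial : ℚ))))
      = ((i.choose a : ℚ) * (j.choose b : ℚ) *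
          ((if b = 0 then (-1:ℚ)^a else 0) + (if a = 0 then (-1:ℚ)^b else 0)
            - (if a = 0 ∧ b = 0 then (1:ℚ) else 0) - (tangleCount a b : ℚ))
          * 2^((i-a)*(j-b))) / ((i.factorial : ℚ) * (j.factorial : ℚ)) := by
    intro a ha b hb
    have hai : a ≤ i := Nat.lt_succ_iff.1 (Finset.mem_range.1 ha)
    have hbj : b ≤ j := Nat.lt_succ_iff.1 (Finset.mem_range.1 hb)
    have h1 : ((i.choose a : ℚ)) * (a.factorial : ℚ) * ((i-a).factorial : ℚ)
        = (i.factorial : ℚ) := by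
      exact_mod_cast Nat.choose_mul_factorial_mul_factorial hai
    have h2 : ((j.choose b : ℚ)) * (b.factorial : ℚ) * ((j-b).factorial : ℚ)
        = (j.factorial : ℚ) := by
      exact_mod_cast Nat.choose_mul_factorial_mul_factorial hbj
    have e1 : (if b = 0 then (-1:ℚ)^a * (a.factorial:ℚ)⁻¹ else 0)
        = (if b = 0 then (-1:ℚ)^a else 0) / ((a.factorial:ℚ) * (b.factorial:ℚ)) := by
      split_ifs with h
      · subst h
        rw [Nat.factorial_zero, Nat.cast_one, mul_one, div_eq_mul_inv]
      · simp
    have e2 : (if a = 0 then (-1:ℚ)^b * (b.factorial:ℚ)⁻¹ else 0)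
        = (if a = 0 then (-1:ℚ)^b else 0) / ((a.factorial:ℚ) * (b.factorial:ℚ)) := by
      split_ifs with h
      · subst h
        rw [Nat.factorial_zero, Nat.cast_one, one_mul, div_eq_mul_inv]
      · simp
    have e3 : (if a = 0 ∧ b = 0 then (1:ℚ) else 0)
        = (if a = 0 ∧ b = 0 then (1:ℚ) else 0) / ((a.factorial:ℚ) * (b.factorial:ℚ)) := by
      split_ifs with h
      · obtain ⟨rfl, rfl⟩ := h
        norm_num [Nat.factorial_zero]
      · simp
    conv_lhs => rw [e1, e2, e3]
    rw [← add_div, ← sub_div, ← sub_div]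
    have hCi : ((i.choose a : ℚ)) ≠ 0 := Nat.cast_ne_zero.2 (Nat.choose_pos hai).ne'
    have hCj : ((j.choose b : ℚ)) ≠ 0 := Nat.cast_ne_zero.2 (Nat.choose_pos hbj).ne'
    rw [← h1, ← h2, div_mul_div_comm]
    rw [show ((i.choose a : ℚ) * (j.choose b : ℚ) *
          ((if b = 0 then (-1:ℚ)^a else 0) + (if a = 0 then (-1:ℚ)^b else 0)
            - (if a = 0 ∧ b = 0 then (1:ℚ) else 0) - (tangleCount a b : ℚ))
          * 2^((i-a)*(j-b)))
        = ((i.choose a : ℚ) * (j.choose b : ℚ)) *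
          (((if b = 0 then (-1:ℚ)^a else 0) + (if a = 0 then (-1:ℚ)^b else 0)
            - (if a = 0 ∧ b = 0 then (1:ℚ) else 0) - (tangleCount a b : ℚ))
          * 2^((i-a)*(j-b))) from by ring]
    rw [show ((i.choose a : ℚ) * (a.factorial : ℚ) * ((i-a).factorial : ℚ))
          * ((j.choose b : ℚ) * (b.factorial : ℚ) * ((j-b).factorial : ℚ))
        = ((i.choose a : ℚ) * (j.choose b : ℚ)) *
          (((a.factorial : ℚ) * (b.factorial:ℚ))
            * (((i-a).factorial : ℚ) * ((j-b).factorial : ℚ))) from by ring]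
    rw [mul_div_mul_left _ _ (mul_ne_zero hCi hCj)]
  rw [Finset.sum_congr rfl (fun a ha => Finset.sum_congr rfl (fun b hb => hterm a ha b hb))]
  simp only [← Finset.sum_div]
  rw [div_eq_zero_iff]
  left
  -- split numerator into four sums
  have hshape : ∀ a ∈ Finset.range (i+1), ∀ b ∈ Finset.range (j+1),
      ((i.choose a : ℚ) * (j.choose b : ℚ) *
          ((if b = 0 then (-1:ℚ)^a else 0) + (if a = 0 then (-1:ℚ)^b else 0)
            - (if a = 0 ∧ b = 0 then (1:ℚ) else 0) - (tangleCount a b : ℚ))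
          * 2^((i-a)*(j-b)))
      = (i.choose a : ℚ) * (j.choose b : ℚ) * (if b = 0 then (-1:ℚ)^a else 0)
          * 2^((i-a)*(j-b))
        + (i.choose a : ℚ) * (j.choose b : ℚ) * (if a = 0 then (-1:ℚ)^b else 0)
          * 2^((i-a)*(j-b))
        - (i.choose a : ℚ) * (j.choose b : ℚ) * (if a = 0 ∧ b = 0 then (1:ℚ) else 0)
          * 2^((i-a)*(j-b))
        - (i.choose a : ℚ) * ((j.choose b : ℚ) * ((tangleCount a b : ℚ)
          * 2^((i-a)*(j-b)))) := by
    intro a _ b _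
    ring
  rw [Finset.sum_congr rfl (fun a ha => Finset.sum_congr rfl (fun b hb => hshape a ha b hb))]
  simp only [Finset.sum_add_distrib, Finset.sum_sub_distrib]
  -- S1
  have hS1 : ∀ a ∈ Finset.range (i+1),
      (∑ b ∈ Finset.range (j+1), (i.choose a : ℚ) * (j.choose b : ℚ)
        * (if b = 0 then (-1:ℚ)^a else 0) * 2^((i-a)*(j-b)))
      = (i.choose a : ℚ) * (-1)^a * 2^((i-a)*j) := by
    intro a _
    rw [Finset.sum_eq_single_of_mem 0 (Finset.mem_range.2 (Nat.succ_pos j))]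
    · simp
    · intro b _ hb0
      simp [hb0]
  -- S2
  have hS2 : ∀ a ∈ Finset.range (i+1),
      (∑ b ∈ Finset.range (j+1), (i.choose a : ℚ) * (j.choose b : ℚ)
        * (if a = 0 then (-1:ℚ)^b else 0) * 2^((i-a)*(j-b)))
      = if a = 0 then ∑ b ∈ Finset.range (j+1),
          (j.choose b : ℚ) * (-1)^b * 2^((j-b)*i) else 0 := by
    intro a _
    split_ifs with ha0
    · subst ha0
      refine Finset.sum_congr rfl (fun b _ => ?_)
      simp only [Nat.choose_zero_right, Nat.cast_one, one_mul, Nat.sub_zero]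
      rw [mul_comm i (j-b)]
    · simp [ha0]
  -- S3
  have hS3 : ∀ a ∈ Finset.range (i+1),
      (∑ b ∈ Finset.range (j+1), (i.choose a : ℚ) * (j.choose b : ℚ)
        * (if a = 0 ∧ b = 0 then (1:ℚ) else 0) * 2^((i-a)*(j-b)))
      = if a = 0 then (2:ℚ)^(i*j) else 0 := by
    intro a _
    rw [Finset.sum_eq_single_of_mem 0 (Finset.mem_range.2 (Nat.succ_pos j))]
    · by_cases ha0 : a = 0
      · subst ha0
        rw [if_pos ⟨rfl, rfl⟩, if_pos rfl]
        simp
      · rw [if_neg (by tauto), if_neg ha0]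
        simp
    · intro b _ hb0
      simp [hb0]
  rw [Finset.sum_congr rfl hS1, Finset.sum_congr rfl hS2, Finset.sum_congr rfl hS3]
  rw [binom_neg i j]
  rw [Finset.sum_eq_single_of_mem 0 (Finset.mem_range.2 (Nat.succ_pos i)) ?hz2]
  case hz2 => intro a _ ha0; simp [ha0]
  rw [if_pos rfl, binom_neg j i]
  rw [Finset.sum_eq_single_of_mem 0 (Finset.mem_range.2 (Nat.succ_pos i)) ?hz3]
  case hz3 => intro a _ ha0; simp [ha0]
  rw [if_pos rfl]
  -- tangle sum via key_count
  have hkey := key_count i j (by omega)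
  have hkeyQ := congrArg (fun n : ℕ => (n : ℚ)) hkey
  push_cast [Nat.cast_sub (Nat.one_le_two_pow)] at hkeyQ
  linarith [hkeyQ]

theorem coeff_B (m : Fin 2 →₀ ℕ) :
    MvPowerSeries.coeff m BlblGF
      = (2:ℚ)^(m 0 * m 1) / (((m 0).factorial : ℚ) * ((m 1).factorial : ℚ)) := by
  rw [MvPowerSeries.coeff_apply]
  rfl

theorem coeff_L (a b : ℕ) :
    MvPowerSeries.coeff (fs a b) (expNegX + expNegY - 1 - TlblGF)
      = (if b = 0 then (-1:ℚ)^a * (a.factorial:ℚ)⁻¹ else 0)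
        + (if a = 0 then (-1:ℚ)^b * (b.factorial:ℚ)⁻¹ else 0)
        - (if a = 0 ∧ b = 0 then (1:ℚ) else 0)
        - (tangleCount a b : ℚ) / ((a.factorial :ℚ) * (b.factorial:ℚ)) := by
  rw [map_sub, map_sub, map_add, MvPowerSeries.coeff_one]
  rw [MvPowerSeries.coeff_apply, MvPowerSeries.coeff_apply, MvPowerSeries.coeff_apply]
  simp only [expNegX, expNegY, TlblGF, fs_apply0, fs_apply1, fs_eq_zero_iff]

theorem key_mul : (expNegX + expNegY - 1 - TlblGF) * BlblGF = 1 := by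
  apply MvPowerSeries.ext
  intro n
  rw [coeff_mul_eq, MvPowerSeries.coeff_one]
  have hrw : (∑ a ∈ Finset.range (n 0 + 1), ∑ b ∈ Finset.range (n 1 + 1),
      MvPowerSeries.coeff (fs a b) (expNegX + expNegY - 1 - TlblGF)
        * MvPowerSeries.coeff (fs (n 0 - a) (n 1 - b)) BlblGF)
      = ∑ a ∈ Finset.range (n 0 + 1), ∑ b ∈ Finset.range (n 1 + 1),
          (((if b = 0 then (-1:ℚ)^a * (a.factorial:ℚ)⁻¹ else 0)
            + (if a = 0 then (-1:ℚ)^b * (b.factorial:ℚ)⁻¹ else 0)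
            - (if a = 0 ∧ b = 0 then (1:ℚ) else 0)
            - (tangleCount a b : ℚ) / ((a.factorial :ℚ) * (b.factorial:ℚ)))
           * ((2:ℚ)^((n 0 - a)*(n 1 - b))
              / (((n 0 - a).factorial : ℚ) * ((n 1 - b).factorial : ℚ)))) := by
    refine Finset.sum_congr rfl (fun a _ => Finset.sum_congr rfl (fun b _ => ?_))
    rw [coeff_L a b, coeff_B, fs_apply0, fs_apply1]
  rw [hrw]
  by_cases h0 : n = 0
  · subst h0
    rw [if_pos rfl]
    simp only [Finsupp.coe_zero, Pi.zero_apply]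
    rw [Finset.sum_range_one, Finset.sum_range_one]
    rw [tangleCount_eq_zero (Or.inl (by norm_num))]
    norm_num
  · rw [if_neg h0]
    have hne : ¬(n 0 = 0 ∧ n 1 = 0) := by
      rintro ⟨h1, h2⟩
      exact h0 (fin2_ext (by rw [h1]; rfl) (by rw [h2]; rfl))
    exact scalar_sum (n 0) (n 1) hne

end PS

end TangleAux

theorem labelled_tangle_gf :
    TlblGF = expNegX + expNegY - 1 - BlblGF⁻¹ := by
  have hB0 : MvPowerSeries.constantCoeff BlblGF ≠ 0 := by
    rw [← MvPowerSeries.coeff_zero_eq_constantCoeff_apply, MvPowerSeries.coeff_apply]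
    show (2:ℚ) ^ ((0 : Fin 2 →₀ ℕ) 0 * (0 : Fin 2 →₀ ℕ) 1)
      / ((((0 : Fin 2 →₀ ℕ) 0).factorial : ℚ) * (((0 : Fin 2 →₀ ℕ) 1).factorial : ℚ)) ≠ 0
    norm_num
  have hinv : BlblGF⁻¹ = expNegX + expNegY - 1 - TlblGF :=
    (MvPowerSeries.inv_eq_iff_mul_eq_one hB0).2 TangleAux.key_mul
  rw [hinv]
  ring
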